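/- Let L be a locally finite modular lattice and let S be a set of covering pairs of L that is closed under cover-projectivity. Then for all x, y ∈ L, x ∼ (x ⊔ y) if and only if (x ⊓ y) ∼ y. -/
import Mathlib


/-- A set `S` of covering pairs of a lattice is closed under cover-projectivity. -/
def CoverProjClosed {L : Type*} [Lattice L] (S : Set (L × L)) : Prop :=
  ∀ x y : L, x ≠ y → x ⊓ y ⋖ x → x ⊓ y ⋖ y → x ⋖ x ⊔ y → y ⋖ x ⊔ y →
    (((x ⊓ y, x) ∈ S ↔ (y, x ⊔ y) ∈ S) ∧ ((x ⊓ y, y) ∈ S ↔ (x, x ⊔ y) ∈ S))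

/-- `Sim S x y` holds iff every covering path from `x ⊓ y` to `x ⊔ y` contains no covering
pair belonging to `S`. -/
def Sim {L : Type*} [Lattice L] (S : Set (L × L)) (x y : L) : Prop :=
  ∀ (n : ℕ) (c : ℕ → L), c 0 = x ⊓ y → c n = x ⊔ y → (∀ i < n, c i ⋖ c (i + 1)) →
    ∀ i < n, (c i, c (i + 1)) ∉ S

section Aux
variable {L : Type*} [Lattice L] [IsModularLattice L]

/-- Joining with a fixed element maps covers to covers or collapses them. -/
lemma aux_sup_cov {a b : L} (hab : a ⋖ b) (t : L) : a ⊔ t = b ⊔ t ∨ a ⊔ t ⋖ b ⊔ t := by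
  rcases hab.eq_or_eq (c := (a ⊔ t) ⊓ b) (le_inf le_sup_left hab.le) inf_le_right with h | h
  · right
    have h2 : (a ⊔ t) ⊓ b ⋖ b := by rw [h]; exact hab
    have h3 := covBy_sup_of_inf_covBy_right h2
    have he : (a ⊔ t) ⊔ b = b ⊔ t := by
      rw [sup_comm a t, sup_assoc, sup_eq_right.2 hab.le, sup_comm]
    rwa [he] at h3
  · left
    exact le_antisymm (sup_le_sup_right hab.le t) (sup_le (inf_eq_right.1 h) le_sup_right)

/-- Meeting with a fixed element maps covers to covers or collapses them. -/
lemma aux_inf_cov {a b : L} (hab : a ⋖ b) (t : L) : a ⊓ t = b ⊓ t ∨ a ⊓ t ⋖ b ⊓ t := by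
  rcases hab.eq_or_eq (c := (b ⊓ t) ⊔ a) le_sup_right (sup_le inf_le_left hab.le) with h | h
  · left
    exact le_antisymm (inf_le_inf_right t hab.le) (le_inf (sup_eq_right.1 h) inf_le_right)
  · right
    have h2 : a ⋖ (b ⊓ t) ⊔ a := by rw [h]; exact hab
    have h3 := inf_covBy_of_covBy_sup_right h2
    have he : (b ⊓ t) ⊓ a = a ⊓ t := by
      rw [inf_comm b t, inf_assoc, inf_eq_right.2 hab.le, inf_comm]
    rwa [he] at h3

variable {S : Set (L × L)} (hS : CoverProjClosed S)

/-- One step of the transfer: moving a cover `A ⋖ B` up by joining a single covering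
step `t' ⋖ t`, `t' ≤ A`, does not change `S`-membership (provided no collapse). -/
lemma aux_step (hS : CoverProjClosed S) {A B t' t : L} (hAB : A ⋖ B) (ht : t' ⋖ t)
    (ht'A : t' ≤ A) (hne : A ⊔ t ≠ B ⊔ t) : ((A, B) ∈ S ↔ (A ⊔ t, B ⊔ t) ∈ S) := by
  by_cases htA : t ≤ A
  · rw [sup_eq_left.2 htA, sup_eq_left.2 (htA.trans hAB.le)]
  · -- A ⊓ t = t'
    have hAt : A ⊓ t = t' := by
      rcases ht.eq_or_eq (c := A ⊓ t) (le_inf ht'A ht.le) inf_le_right with h | h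
      · exact h
      · exact absurd (h ▸ inf_le_left) htA
    -- A ⋖ A ⊔ t
    have hcov1 : A ⋖ A ⊔ t := by
      have := covBy_sup_of_inf_covBy_left (a := t) (b := A)
        (by rw [inf_comm t A, hAt]; exact ht)
      rwa [sup_comm t A] at this
    -- B ≰ A ⊔ t
    have hBnle : ¬ B ≤ A ⊔ t := fun hle =>
      hne (le_antisymm (sup_le_sup_right hAB.le t) (sup_le hle le_sup_right))
    -- B ⊓ (A ⊔ t) = A
    have hmeet : B ⊓ (A ⊔ t) = A := by
      rcases hAB.eq_or_eq (c := B ⊓ (A ⊔ t)) (le_inf hAB.le le_sup_left) inf_le_left with h | h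
      · exact h
      · exact absurd (h ▸ inf_le_right) hBnle
    have hjoin : B ⊔ (A ⊔ t) = B ⊔ t := by
      rw [← sup_assoc, sup_eq_left.2 hAB.le]
    have hBne : B ≠ A ⊔ t := fun h => hBnle h.le
    have h1 : B ⊓ (A ⊔ t) ⋖ B := by rw [hmeet]; exact hAB
    have h2 : B ⊓ (A ⊔ t) ⋖ A ⊔ t := by rw [hmeet]; exact hcov1
    have h3 : B ⋖ B ⊔ (A ⊔ t) := covBy_sup_of_inf_covBy_right h2
    have h4 : A ⊔ t ⋖ B ⊔ (A ⊔ t) := covBy_sup_of_inf_covBy_left h1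
    have := (hS B (A ⊔ t) hBne h1 h2 h3 h4).1
    rwa [hmeet, hjoin] at this

/-- The key injectivity: joining with `t ≤ x` does not collapse distinct elements of
`[x ⊓ y, y]`. -/
lemma aux_inj {x y a b t : L} (ha : x ⊓ y ≤ a) (hay : a ≤ y) (hb : x ⊓ y ≤ b)
    (hby : b ≤ y) (htx : t ≤ x) (hne : a ≠ b) : a ⊔ t ≠ b ⊔ t := by
  intro h
  have key : ∀ c : L, x ⊓ y ≤ c → c ≤ y → (c ⊔ t) ⊓ y = c := by
    intro c hc1 hc2
    rw [sup_inf_assoc_of_le t hc2]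
    have : t ⊓ y ≤ c := le_trans (inf_le_inf_right y htx) hc1
    exact sup_eq_left.2 this
  have := key a ha hay
  rw [h, key b hb hby] at this
  exact hne this.symm

/-- Transfer of `S`-membership along joins with elements of `[x ⊓ y, x]`. -/
lemma aux_transfer [LocallyFiniteOrder L] (hS : CoverProjClosed S)
    {x y a b : L} (ha : x ⊓ y ≤ a) (hab : a ⋖ b) (hby : b ≤ y) :
    ∀ N t, (Finset.Icc (x ⊓ y) t).card ≤ N → x ⊓ y ≤ t → t ≤ x →
      ((a ⊔ t, b ⊔ t) ∈ S ↔ (a, b) ∈ S) := by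
  have hb : x ⊓ y ≤ b := ha.trans hab.le
  have hay : a ≤ y := hab.le.trans hby
  intro N
  induction N with
  | zero =>
    intro t hcard hlt _
    exact absurd (Finset.card_pos.2 ⟨x ⊓ y, Finset.mem_Icc.2 ⟨le_refl _, hlt⟩⟩)
      (by omega)
  | succ N ih =>
    intro t hcard hlt htx
    rcases eq_or_lt_of_le hlt with h | h
    · rw [← h, sup_eq_left.2 ha, sup_eq_left.2 hb]
    · obtain ⟨t', ht'1, ht'2⟩ := exists_le_covBy_of_lt h
      have ht'x : t' ≤ x := ht'2.le.trans htx
      have hcard' : (Finset.Icc (x ⊓ y) t').card ≤ N := by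
        have hss : Finset.Icc (x ⊓ y) t' ⊂ Finset.Icc (x ⊓ y) t := by
          refine Finset.ssubset_iff_of_subset (Finset.Icc_subset_Icc_right ht'2.le) |>.2 ?_
          exact ⟨t, Finset.mem_Icc.2 ⟨hlt, le_refl t⟩,
            fun hmem => ht'2.lt.not_ge (Finset.mem_Icc.1 hmem).2⟩
        have := Finset.card_lt_card hss
        omega
      have ihS := ih t' hcard' ht'1 ht'x
      -- the cover at level t'
      have hne' : a ⊔ t' ≠ b ⊔ t' := aux_inj ha hay hb hby ht'x hab.ne
      have hcov' : a ⊔ t' ⋖ b ⊔ t' := (aux_sup_cov hab t').resolve_left hne'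
      have hnet : (a ⊔ t') ⊔ t ≠ (b ⊔ t') ⊔ t := by
        rw [sup_assoc, sup_assoc, sup_eq_right.2 ht'2.le]
        exact aux_inj ha hay hb hby htx hab.ne
      have hstep := aux_step hS hcov' ht'2 le_sup_right hnet
      rw [sup_assoc, sup_assoc, sup_eq_right.2 ht'2.le] at hstep
      rw [← hstep]
      exact ihS

omit [IsModularLattice L] in
/-- Monotonicity along covering paths. -/
lemma aux_chain_mono {n : ℕ} {c : ℕ → L} (hc : ∀ i < n, c i ⋖ c (i + 1)) :
    ∀ j k, j ≤ k → k ≤ n → c j ≤ c k := by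
  intro j k hjk hkn
  induction k with
  | zero => simp_all
  | succ k ih =>
    rcases Nat.eq_or_lt_of_le hjk with h | h
    · rw [h]
    · exact (ih (Nat.lt_succ_iff.1 h) (by omega)).trans (hc k (by omega)).le

end Aux

/-- `x ∼ (x ⊔ y)` iff `(x ⊓ y) ∼ y`. -/
theorem stmt5 {L : Type*} [Lattice L] [LocallyFiniteOrder L] [IsModularLattice L]
    (S : Set (L × L)) (hS : CoverProjClosed S) :
    ∀ x y : L, Sim S x (x ⊔ y) ↔ Sim S (x ⊓ y) y := by
  intro x y
  constructor
  · -- from paths in [x, x ⊔ y] to paths in [x ⊓ y, y]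
    intro h n c h0 hn hcov i hin
    rw [inf_of_le_left inf_le_right] at h0
    rw [sup_of_le_right inf_le_right] at hn
    have hmem : ∀ j, j ≤ n → x ⊓ y ≤ c j ∧ c j ≤ y := fun j hj =>
      ⟨h0 ▸ aux_chain_mono hcov 0 j (Nat.zero_le j) hj,
       hn ▸ aux_chain_mono hcov j n hj le_rfl⟩
    -- covering pair bounds
    have hci := hmem i hin.le
    have hci1 := hmem (i + 1) hin
    have hcovi := hcov i hin
    -- the lifted path
    set d : ℕ → L := fun j => c j ⊔ x with hd
    have hd0 : d 0 = x ⊓ (x ⊔ y) := by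
      simp only [hd, h0]
      rw [inf_sup_self, sup_comm, sup_inf_self]
    have hdn : d n = x ⊔ (x ⊔ y) := by
      simp only [hd, hn]
      rw [sup_comm y x, ← sup_assoc, sup_idem]
    have hdcov : ∀ j < n, d j ⋖ d (j + 1) := by
      intro j hj
      have hj1 := hmem j hj.le
      have hj2 := hmem (j + 1) hj
      have hne := aux_inj hj1.1 hj1.2 hj2.1 hj2.2 (le_refl x) (hcov j hj).ne
      exact (aux_sup_cov (hcov j hj) x).resolve_left hne
    have hnotin := h n d hd0 hdn hdcov i hin
    intro hmemS
    have htrans := aux_transfer hS hci.1 hcovi hci1.2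
      (Finset.Icc (x ⊓ y) x).card x le_rfl inf_le_left le_rfl
    exact hnotin (htrans.2 hmemS)
  · -- from paths in [x ⊓ y, y] to paths in [x, x ⊔ y]
    intro h n c h0 hn hcov i hin
    rw [inf_of_le_left le_sup_left] at h0
    rw [sup_of_le_right le_sup_left] at hn
    have hmem : ∀ j, j ≤ n → x ≤ c j ∧ c j ≤ x ⊔ y := fun j hj =>
      ⟨h0 ▸ aux_chain_mono hcov 0 j (Nat.zero_le j) hj,
       hn ▸ aux_chain_mono hcov j n hj le_rfl⟩
    -- the projection recovers the path after joining with x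
    have hrec : ∀ j, j ≤ n → (c j ⊓ y) ⊔ x = c j := by
      intro j hj
      have hj1 := hmem j hj
      rw [inf_sup_assoc_of_le y hj1.1, sup_comm y x]
      exact inf_eq_left.2 hj1.2
    have he0 : c 0 ⊓ y = (x ⊓ y) ⊓ y := by rw [h0, inf_assoc, inf_idem]
    have hen : c n ⊓ y = (x ⊓ y) ⊔ y := by
      rw [hn, inf_of_le_right le_sup_right, sup_eq_right.2 inf_le_right]
    have hecov : ∀ j < n, c j ⊓ y ⋖ c (j + 1) ⊓ y := by
      intro j hj
      refine (aux_inf_cov (hcov j hj) y).resolve_left fun hcol => (hcov j hj).ne ?_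
      rw [← hrec j hj.le, ← hrec (j + 1) hj, hcol]
    have hnotin := h n (fun j => c j ⊓ y) he0 hen hecov i hin
    intro hmemS
    have hei : x ⊓ y ≤ c i ⊓ y := inf_le_inf_right y (hmem i hin.le).1
    have htrans := aux_transfer hS hei (hecov i hin) inf_le_right
      (Finset.Icc (x ⊓ y) x).card x le_rfl inf_le_left le_rfl
    rw [hrec i hin.le, hrec (i + 1) hin] at htrans
    exact hnotin (htrans.1 hmemS)
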